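/- Let a > 0, s > 0, p ∈ [1,2], L₂ > 0, C_Λ ≥ 1, and ϱ, δ > 0 with δ < ϱ L₂. Consider, for each j ∈ ℕ₀, a block sequence f_j supported on level j with all |Λ_j| ≤ C_Λ 2^{jd} coordinates equal to β := C_Λ^{−1} 2^{−jd/2} min{2^{−js}ϱ, L₂^{−1} 2^{ja}δ}. Then ‖f_j‖_{s,p,q} ≤ ϱ and ‖f_j‖_{−a,2,1} ≤ δ/L₂, while ‖f_j‖_{0,p,1} ≥ C_Λ^{−1} min{2^{−js}ϱ, L₂^{−1} 2^{ja}δ}. Consequently sup_j ‖f_j‖_{0,p,1} ≥ C_Λ^{−1} 2^{−s} L₂^{−s/(s+a)} ϱ^{a/(s+a)} δ^{s/(s+a)}. -/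

import Mathlib

open Real ENNReal

/-- ℓ^p norm on a finite block for p ∈ [1,∞], valued in ℝ≥0∞. -/
noncomputable def blockNormE {Λ : Type*} [Fintype Λ] (p : ℝ≥0∞) (v : Λ → ℝ) : ℝ≥0∞ :=
  if p = ∞ then Finset.univ.sup (fun k => (‖v k‖₊ : ℝ≥0∞))
  else (∑ k, (‖v k‖₊ : ℝ≥0∞) ^ p.toReal) ^ (1 / p.toReal)

/-- ℓ^q norm of a sequence in ℝ≥0∞, q ∈ [1,∞]. -/
noncomputable def lqNormE (q : ℝ≥0∞) (x : ℕ → ℝ≥0∞) : ℝ≥0∞ :=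
  if q = ∞ then ⨆ j, x j else (∑' j, x j ^ q.toReal) ^ (1 / q.toReal)

/-- weight 2^{js} 2^{jd(1/2 − 1/p)} (with the convention 1/∞ = 0). -/
noncomputable def wtE (d : ℕ) (s : ℝ) (p : ℝ≥0∞) (j : ℕ) : ℝ≥0∞ :=
  ENNReal.ofReal ((2:ℝ) ^ ((j:ℝ) * s) * (2:ℝ) ^ ((j:ℝ) * d * (1 / 2 - 1 / p.toReal)))

/-- sequence Besov norm ‖z‖_{b^s_{p,q}}. -/
noncomputable def besovNormE {Λ : ℕ → Type*} [∀ j, Fintype (Λ j)]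
    (d : ℕ) (s : ℝ) (p q : ℝ≥0∞) (z : ∀ j, Λ j → ℝ) : ℝ≥0∞ :=
  lqNormE q (fun j => wtE d s p j * blockNormE p (z j))

lemma lq_single (q : ℝ≥0∞) (hq : 1 ≤ q) (x : ℕ → ℝ≥0∞) (j : ℕ)
    (h : ∀ n, n ≠ j → x n = 0) : lqNormE q x = x j := by
  unfold lqNormE
  split_ifs with hq'
  · refine le_antisymm (iSup_le fun n => ?_) (le_iSup _ j)
    rcases eq_or_ne n j with rfl | hn
    · exact le_rfl
    · simp [h n hn]
  · have hr : 0 < q.toReal := ENNReal.toReal_pos (by intro h0; simp [h0] at hq) hq'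
    rw [tsum_eq_single j (fun n hn => by
      rw [h n hn]; exact ENNReal.zero_rpow_of_pos hr)]
    rw [← ENNReal.rpow_mul, mul_one_div, div_self hr.ne', ENNReal.rpow_one]

lemma block_const {Λ : Type*} [Fintype Λ] (p : ℝ≥0∞) (hp : p ≠ ∞) (hp1 : 1 ≤ p)
    (c : ℝ) (hc : 0 ≤ c) :
    blockNormE p (fun _ : Λ => c)
      = (Fintype.card Λ : ℝ≥0∞) ^ (1 / p.toReal) * ENNReal.ofReal c := by
  have hr : 0 < p.toReal := ENNReal.toReal_pos (by intro h0; simp [h0] at hp1) hp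
  unfold blockNormE
  rw [if_neg hp]
  simp only [Finset.sum_const, Finset.card_univ, nsmul_eq_mul]
  rw [ENNReal.mul_rpow_of_nonneg _ _ (by positivity), ← ENNReal.rpow_mul, mul_one_div,
    div_self hr.ne', ENNReal.rpow_one, ← enorm_eq_nnnorm, Real.enorm_eq_ofReal hc]

lemma exp_combine (j d : ℕ) (r : ℝ) :
    (2:ℝ) ^ ((j:ℝ)*d*(1/2-1/r)) * 2 ^ ((j:ℝ)*d*(1/r)) * 2 ^ (-((j:ℝ)*d)/2) = 1 := by
  rw [← Real.rpow_add two_pos, ← Real.rpow_add two_pos,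
    show (j:ℝ)*d*(1/2-1/r) + (j:ℝ)*d*(1/r) + (-((j:ℝ)*d)/2) = 0 by ring, Real.rpow_zero]

lemma upper_bound (j d : ℕ) (CΛ m r s' : ℝ) (hCΛ : 1 ≤ CΛ) (hm : 0 ≤ m) (hr : 1 ≤ r)
    (N : ℕ) (hN₂ : (N:ℝ) ≤ CΛ * 2 ^ ((j:ℝ) * d)) :
    (2:ℝ) ^ ((j:ℝ)*s') * (2:ℝ) ^ ((j:ℝ)*d*(1/2 - 1/r)) *
      ((N:ℝ) ^ (1/r) * (CΛ⁻¹ * (2:ℝ) ^ (-((j:ℝ)*d)/2) * m)) ≤ 2 ^ ((j:ℝ)*s') * m := by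
  have hC0 : (0:ℝ) < CΛ := lt_of_lt_of_le one_pos hCΛ
  have hNle : (N:ℝ) ^ (1/r) ≤ CΛ * 2 ^ ((j:ℝ)*d*(1/r)) := by
    calc (N:ℝ) ^ (1/r) ≤ (CΛ * 2 ^ ((j:ℝ)*d)) ^ (1/r) :=
          Real.rpow_le_rpow (N.cast_nonneg) hN₂ (by positivity)
      _ = CΛ ^ (1/r) * ((2:ℝ) ^ ((j:ℝ)*d)) ^ (1/r) :=
          Real.mul_rpow hC0.le (by positivity)
      _ ≤ CΛ * 2 ^ ((j:ℝ)*d*(1/r)) := by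
          rw [← Real.rpow_mul (by norm_num : (0:ℝ) ≤ 2)]
          have h1 : CΛ ^ (1/r) ≤ CΛ := by
            calc CΛ ^ (1/r) ≤ CΛ ^ (1:ℝ) :=
                  Real.rpow_le_rpow_of_exponent_le hCΛ (by
                    rw [div_le_one (lt_of_lt_of_le one_pos hr)]; exact hr)
              _ = CΛ := Real.rpow_one _
          exact mul_le_mul_of_nonneg_right h1 (by positivity)
  calc (2:ℝ) ^ ((j:ℝ)*s') * (2:ℝ) ^ ((j:ℝ)*d*(1/2 - 1/r)) *
        ((N:ℝ) ^ (1/r) * (CΛ⁻¹ * (2:ℝ) ^ (-((j:ℝ)*d)/2) * m))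
      ≤ (2:ℝ) ^ ((j:ℝ)*s') * (2:ℝ) ^ ((j:ℝ)*d*(1/2 - 1/r)) *
        ((CΛ * 2 ^ ((j:ℝ)*d*(1/r))) * (CΛ⁻¹ * (2:ℝ) ^ (-((j:ℝ)*d)/2) * m)) := by
        gcongr
    _ = (2:ℝ) ^ ((j:ℝ)*s') * m * (CΛ * CΛ⁻¹) *
        ((2:ℝ) ^ ((j:ℝ)*d*(1/2-1/r)) * 2 ^ ((j:ℝ)*d*(1/r)) * 2 ^ (-((j:ℝ)*d)/2)) := by ring
    _ = 2 ^ ((j:ℝ)*s') * m := by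
        rw [mul_inv_cancel₀ hC0.ne', exp_combine]; ring

lemma lower_bound' (j d : ℕ) (CΛ m r : ℝ) (hCΛ : 1 ≤ CΛ) (hm : 0 ≤ m) (hr : 1 ≤ r)
    (N : ℕ) (hN₁ : (2:ℝ) ^ ((j:ℝ)*d) ≤ N) :
    CΛ⁻¹ * m ≤ (2:ℝ) ^ ((j:ℝ)*d*(1/2 - 1/r)) *
      ((N:ℝ) ^ (1/r) * (CΛ⁻¹ * (2:ℝ) ^ (-((j:ℝ)*d)/2) * m)) := by
  have hC0 : (0:ℝ) < CΛ := lt_of_lt_of_le one_pos hCΛ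
  have hNge : (2:ℝ) ^ ((j:ℝ)*d*(1/r)) ≤ (N:ℝ) ^ (1/r) := by
    rw [Real.rpow_mul (by norm_num : (0:ℝ) ≤ 2)]
    exact Real.rpow_le_rpow (by positivity) hN₁ (by positivity)
  calc CΛ⁻¹ * m = CΛ⁻¹ * m *
        ((2:ℝ) ^ ((j:ℝ)*d*(1/2-1/r)) * 2 ^ ((j:ℝ)*d*(1/r)) * 2 ^ (-((j:ℝ)*d)/2)) := by
        rw [exp_combine]; ring
    _ = (2:ℝ) ^ ((j:ℝ)*d*(1/2 - 1/r)) *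
        ((2:ℝ) ^ ((j:ℝ)*d*(1/r)) * (CΛ⁻¹ * (2:ℝ) ^ (-((j:ℝ)*d)/2) * m)) := by ring
    _ ≤ _ := by gcongr

lemma besov_single {Λ : ℕ → Type*} [∀ j, Fintype (Λ j)] (d : ℕ) (s' : ℝ) (p q : ℝ≥0∞)
    (hptop : p ≠ ∞) (hp1 : 1 ≤ p) (hq : 1 ≤ q) (j : ℕ) (c : ℝ) (hc : 0 ≤ c)
    (z : ∀ n, Λ n → ℝ) (hz : ∀ n (k : Λ n), z n k = if n = j then c else 0) :
    besovNormE d s' p q z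
      = wtE d s' p j * ((Fintype.card (Λ j) : ℝ≥0∞) ^ (1/p.toReal) * ENNReal.ofReal c) := by
  unfold besovNormE
  rw [lq_single q hq _ j ?_]
  · have hzz : z j = fun _ => c := funext fun k => by simp [hz j k]
    rw [hzz, block_const p hptop hp1 c hc]
  · intro n hn
    have hzz : z n = fun _ => (0:ℝ) := funext fun k => by simp [hz n k, hn]
    rw [hzz, block_const p hptop hp1 0 le_rfl]
    simp

lemma conv_ofReal {Λ : ℕ → Type*} [∀ j, Fintype (Λ j)] (d : ℕ) (s' : ℝ) (p : ℝ≥0∞)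
    (j : ℕ) (hN : 0 < Fintype.card (Λ j)) (c : ℝ) (hc : 0 ≤ c) :
    wtE d s' p j * ((Fintype.card (Λ j) : ℝ≥0∞) ^ (1/p.toReal) * ENNReal.ofReal c)
      = ENNReal.ofReal ((2:ℝ) ^ ((j:ℝ)*s') * (2:ℝ) ^ ((j:ℝ)*d*(1/2 - 1/p.toReal)) *
          ((Fintype.card (Λ j) : ℝ) ^ (1/p.toReal) * c)) := by
  unfold wtE
  rw [← ENNReal.ofReal_natCast (Fintype.card (Λ j)),
    ENNReal.ofReal_rpow_of_pos (by exact_mod_cast hN),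
    ← ENNReal.ofReal_mul (by positivity), ← ENNReal.ofReal_mul (by positivity)]

/-- lower bound construction: single-level block sequences f_j with
constant coordinates β realize ‖f_j‖_{s,p,q} ≤ ϱ, ‖f_j‖_{−a,2,1} ≤ δ/L₂ and
‖f_j‖_{0,p,1} ≥ C_Λ⁻¹ min{2^{−js}ϱ, L₂⁻¹2^{ja}δ}, whence
sup_j ‖f_j‖_{0,p,1} ≥ C_Λ⁻¹ 2^{−s} L₂^{−s/(s+a)} ϱ^{a/(s+a)} δ^{s/(s+a)}. -/
theorem stmt16 {Λ : ℕ → Type*} [∀ j, Fintype (Λ j)]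
    (d : ℕ) (hd : 1 ≤ d) (CΛ : ℝ) (hCΛ : 1 ≤ CΛ)
    (hcard : ∀ j : ℕ, 2 ^ (j * d) ≤ Fintype.card (Λ j) ∧
      (Fintype.card (Λ j) : ℝ) ≤ CΛ * 2 ^ (j * d))
    (p q : ℝ≥0∞) (hp1 : 1 ≤ p) (hp2 : p ≤ 2) (hq1 : 1 ≤ q)
    (a s L₂ ϱ δ : ℝ) (ha : 0 < a) (hs : 0 < s) (hL₂ : 0 < L₂) (hϱ : 0 < ϱ)
    (hδ : 0 < δ) (hδϱ : δ < ϱ * L₂)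
    (β : ℕ → ℝ)
    (hβ : ∀ j : ℕ, β j = CΛ⁻¹ * (2:ℝ) ^ (-((j:ℝ) * d) / 2) *
      min ((2:ℝ) ^ (-(j:ℝ) * s) * ϱ) (L₂⁻¹ * (2:ℝ) ^ ((j:ℝ) * a) * δ))
    (f : ℕ → ∀ n, Λ n → ℝ)
    (hf : ∀ (j n : ℕ) (k : Λ n), f j n k = if n = j then β j else 0) :
    (∀ j : ℕ,
      besovNormE d s p q (f j) ≤ ENNReal.ofReal ϱ ∧
      besovNormE d (-a) 2 1 (f j) ≤ ENNReal.ofReal (δ / L₂) ∧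
      ENNReal.ofReal (CΛ⁻¹ *
          min ((2:ℝ) ^ (-(j:ℝ) * s) * ϱ) (L₂⁻¹ * (2:ℝ) ^ ((j:ℝ) * a) * δ)) ≤
        besovNormE d 0 p 1 (f j)) ∧
    ENNReal.ofReal (CΛ⁻¹ * (2:ℝ) ^ (-s) * L₂ ^ (-(s / (s + a))) *
        ϱ ^ (a / (s + a)) * δ ^ (s / (s + a))) ≤
      ⨆ j : ℕ, besovNormE d 0 p 1 (f j) := by
  have hC0 : (0:ℝ) < CΛ := lt_of_lt_of_le one_pos hCΛ
  have hptop : p ≠ ∞ := ne_top_of_le_ne_top (by simp) hp2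
  have hr1 : 1 ≤ p.toReal := by
    have := ENNReal.toReal_mono hptop hp1; simpa using this
  -- per-level facts
  have hM : ∀ j : ℕ, 0 < min ((2:ℝ) ^ (-(j:ℝ) * s) * ϱ) (L₂⁻¹ * (2:ℝ) ^ ((j:ℝ) * a) * δ) :=
    fun j => lt_min (by positivity) (by positivity)
  have hβ0 : ∀ j, 0 ≤ β j := fun j => by rw [hβ j]; positivity
  have hE : ∀ j : ℕ, (2:ℝ) ^ ((j:ℝ) * (d:ℝ)) = (2:ℝ) ^ (j * d : ℕ) := fun j => by
    rw [← Real.rpow_natCast 2 (j*d), Nat.cast_mul]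
  have hN0 : ∀ j, 0 < Fintype.card (Λ j) :=
    fun j => lt_of_lt_of_le (pow_pos two_pos _) (hcard j).1
  have hN₂ : ∀ j : ℕ, (Fintype.card (Λ j) : ℝ) ≤ CΛ * 2 ^ ((j:ℝ) * d) := fun j => by
    rw [hE]; exact (hcard j).2
  have hN₁ : ∀ j : ℕ, (2:ℝ) ^ ((j:ℝ) * d) ≤ Fintype.card (Λ j) := fun j => by
    rw [hE]; exact_mod_cast (hcard j).1
  have h3 : ∀ j : ℕ, ENNReal.ofReal (CΛ⁻¹ *
      min ((2:ℝ) ^ (-(j:ℝ) * s) * ϱ) (L₂⁻¹ * (2:ℝ) ^ ((j:ℝ) * a) * δ)) ≤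
      besovNormE d 0 p 1 (f j) := by
    intro j
    rw [besov_single d 0 p 1 hptop hp1 le_rfl j (β j) (hβ0 j) (f j) (hf j),
      conv_ofReal d 0 p j (hN0 j) (β j) (hβ0 j), hβ j]
    apply ENNReal.ofReal_le_ofReal
    rw [mul_zero (j:ℝ), Real.rpow_zero, one_mul]
    exact lower_bound' j d CΛ _ p.toReal hCΛ (hM j).le hr1 _ (hN₁ j)
  refine ⟨fun j => ⟨?_, ?_, h3 j⟩, ?_⟩
  · -- ‖f_j‖_{s,p,q} ≤ ϱ
    rw [besov_single d s p q hptop hp1 hq1 j (β j) (hβ0 j) (f j) (hf j),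
      conv_ofReal d s p j (hN0 j) (β j) (hβ0 j), hβ j]
    apply ENNReal.ofReal_le_ofReal
    calc (2:ℝ) ^ ((j:ℝ)*s) * (2:ℝ) ^ ((j:ℝ)*d*(1/2 - 1/p.toReal)) *
          ((Fintype.card (Λ j) : ℝ) ^ (1/p.toReal) * (CΛ⁻¹ * (2:ℝ) ^ (-((j:ℝ)*d)/2) *
            min ((2:ℝ) ^ (-(j:ℝ) * s) * ϱ) (L₂⁻¹ * (2:ℝ) ^ ((j:ℝ) * a) * δ)))
        ≤ 2 ^ ((j:ℝ)*s) * min ((2:ℝ) ^ (-(j:ℝ) * s) * ϱ) (L₂⁻¹ * (2:ℝ) ^ ((j:ℝ) * a) * δ) :=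
          upper_bound j d CΛ _ p.toReal s hCΛ (hM j).le hr1 _ (hN₂ j)
      _ ≤ 2 ^ ((j:ℝ)*s) * ((2:ℝ) ^ (-(j:ℝ) * s) * ϱ) := by
          gcongr; exact min_le_left _ _
      _ = ϱ := by
          rw [← mul_assoc, ← Real.rpow_add two_pos,
            show (j:ℝ)*s + -(j:ℝ)*s = 0 by ring, Real.rpow_zero, one_mul]
  · -- ‖f_j‖_{-a,2,1} ≤ δ/L₂
    have h2top : (2:ℝ≥0∞) ≠ ∞ := by simp
    have h21 : (1:ℝ≥0∞) ≤ 2 := by norm_num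
    have h2r : 1 ≤ (2:ℝ≥0∞).toReal := by simp
    rw [besov_single d (-a) 2 1 h2top h21 le_rfl j (β j) (hβ0 j) (f j) (hf j),
      conv_ofReal d (-a) 2 j (hN0 j) (β j) (hβ0 j), hβ j]
    apply ENNReal.ofReal_le_ofReal
    calc (2:ℝ) ^ ((j:ℝ)*(-a)) * (2:ℝ) ^ ((j:ℝ)*d*(1/2 - 1/(2:ℝ≥0∞).toReal)) *
          ((Fintype.card (Λ j) : ℝ) ^ (1/(2:ℝ≥0∞).toReal) * (CΛ⁻¹ * (2:ℝ) ^ (-((j:ℝ)*d)/2) *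
            min ((2:ℝ) ^ (-(j:ℝ) * s) * ϱ) (L₂⁻¹ * (2:ℝ) ^ ((j:ℝ) * a) * δ)))
        ≤ 2 ^ ((j:ℝ)*(-a)) * min ((2:ℝ) ^ (-(j:ℝ) * s) * ϱ) (L₂⁻¹ * (2:ℝ) ^ ((j:ℝ) * a) * δ) :=
          upper_bound j d CΛ _ (2:ℝ≥0∞).toReal (-a) hCΛ (hM j).le h2r _ (hN₂ j)
      _ ≤ 2 ^ ((j:ℝ)*(-a)) * (L₂⁻¹ * (2:ℝ) ^ ((j:ℝ) * a) * δ) := by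
          gcongr; exact min_le_right _ _
      _ = δ / L₂ := by
          have h1 : (2:ℝ) ^ ((j:ℝ)*(-a)) * (2:ℝ) ^ ((j:ℝ)*a) = 1 := by
            rw [← Real.rpow_add two_pos, show (j:ℝ)*(-a) + (j:ℝ)*a = 0 by ring,
              Real.rpow_zero]
          calc (2:ℝ) ^ ((j:ℝ)*(-a)) * (L₂⁻¹ * (2:ℝ) ^ ((j:ℝ) * a) * δ)
              = ((2:ℝ) ^ ((j:ℝ)*(-a)) * (2:ℝ) ^ ((j:ℝ)*a)) * L₂⁻¹ * δ := by ring
            _ = δ / L₂ := by rw [h1, one_mul, inv_mul_eq_div]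
  · -- the supremum bound
    have hsa : (0:ℝ) < s + a := by linarith
    have hsane : s + a ≠ 0 := hsa.ne'
    have hb : (0:ℝ) < ϱ * L₂ / δ := by positivity
    set T := (ϱ * L₂ / δ) ^ ((1:ℝ)/(s+a)) with hTdef
    have hT0 : 0 < T := Real.rpow_pos_of_pos hb _
    have hT1 : 1 < T := by
      rw [hTdef]
      exact (Real.one_lt_rpow_iff_of_pos hb).2 (Or.inl ⟨(one_lt_div hδ).2 hδϱ, by positivity⟩)
    have hA : (0:ℝ) < L₂ ^ (-(s/(s+a))) := Real.rpow_pos_of_pos hL₂ _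
    have hB : (0:ℝ) < ϱ ^ (a/(s+a)) := Real.rpow_pos_of_pos hϱ _
    have hC : (0:ℝ) < δ ^ (s/(s+a)) := Real.rpow_pos_of_pos hδ _
    have hTs : (0:ℝ) < T ^ (-s) := Real.rpow_pos_of_pos hT0 _
    have hTa : (0:ℝ) < T ^ a := Real.rpow_pos_of_pos hT0 _
    have hϱL : (0:ℝ) < ϱ * L₂ := by positivity
    have logeq : ∀ A B : ℝ, 0 < A → 0 < B → Real.log A = Real.log B → A = B :=
      fun A B hA hB h => Real.log_injOn_pos (Set.mem_Ioi.mpr hA) (Set.mem_Ioi.mpr hB) h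
    have Eq1 : T ^ (-s) * ϱ = L₂ ^ (-(s/(s+a))) * ϱ ^ (a/(s+a)) * δ ^ (s/(s+a)) := by
      apply logeq _ _ (by positivity) (by positivity)
      rw [Real.log_mul hTs.ne' hϱ.ne', Real.log_rpow hT0, hTdef,
        Real.log_rpow hb,
        Real.log_mul (mul_pos hA hB).ne' hC.ne',
        Real.log_mul hA.ne' hB.ne',
        Real.log_rpow hL₂, Real.log_rpow hϱ, Real.log_rpow hδ,
        Real.log_div hϱL.ne' hδ.ne', Real.log_mul hϱ.ne' hL₂.ne']
      field_simp
      ring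
    have Eq2 : L₂⁻¹ * T ^ a * δ = L₂ ^ (-(s/(s+a))) * ϱ ^ (a/(s+a)) * δ ^ (s/(s+a)) := by
      apply logeq _ _ (by positivity) (by positivity)
      rw [Real.log_mul (mul_pos (inv_pos.2 hL₂) hTa).ne' hδ.ne',
        Real.log_mul (inv_pos.2 hL₂).ne' hTa.ne',
        Real.log_inv, Real.log_rpow hT0, hTdef, Real.log_rpow hb,
        Real.log_mul (mul_pos hA hB).ne' hC.ne',
        Real.log_mul hA.ne' hB.ne',
        Real.log_rpow hL₂, Real.log_rpow hϱ, Real.log_rpow hδ,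
        Real.log_div hϱL.ne' hδ.ne', Real.log_mul hϱ.ne' hL₂.ne']
      field_simp
      ring
    have hex : ∃ n : ℕ, T < 2 ^ n := pow_unbounded_of_one_lt T (by norm_num)
    set j₀ := Nat.find hex with hj₀def
    have hj₀ : T < 2 ^ j₀ := Nat.find_spec hex
    have hj₀pos : j₀ ≠ 0 := by
      intro h
      rw [h] at hj₀
      simp at hj₀
      linarith
    have hmin : ¬ T < 2 ^ (j₀ - 1) :=
      Nat.find_min hex (Nat.sub_lt (Nat.pos_of_ne_zero hj₀pos) one_pos)
    have h2T : (2:ℝ) ^ j₀ ≤ 2 * T := by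
      have hle : (2:ℝ) ^ (j₀ - 1) ≤ T := le_of_not_gt hmin
      have hpow : (2:ℝ) ^ j₀ = 2 * 2 ^ (j₀ - 1) := by
        rw [← pow_succ']
        congr 1
        omega
      rw [hpow]; linarith
    have e1 : ((2:ℝ) ^ j₀) ^ (-s) = (2:ℝ) ^ (-(j₀:ℝ)*s) := by
      rw [← Real.rpow_natCast 2 j₀, ← Real.rpow_mul (by norm_num : (0:ℝ) ≤ 2)]
      congr 1; ring
    have e2 : ((2:ℝ) ^ j₀) ^ a = (2:ℝ) ^ ((j₀:ℝ)*a) := by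
      rw [← Real.rpow_natCast 2 j₀, ← Real.rpow_mul (by norm_num : (0:ℝ) ≤ 2)]
    have key : (2:ℝ) ^ (-s) * (L₂ ^ (-(s/(s+a))) * ϱ ^ (a/(s+a)) * δ ^ (s/(s+a)))
        ≤ min ((2:ℝ) ^ (-(j₀:ℝ) * s) * ϱ) (L₂⁻¹ * (2:ℝ) ^ ((j₀:ℝ) * a) * δ) := by
      apply le_min
      · calc (2:ℝ) ^ (-s) * (L₂ ^ (-(s/(s+a))) * ϱ ^ (a/(s+a)) * δ ^ (s/(s+a)))
            = (2:ℝ) ^ (-s) * (T ^ (-s) * ϱ) := by rw [Eq1]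
          _ = ((2*T) ^ (-s)) * ϱ := by
              rw [Real.mul_rpow (by norm_num : (0:ℝ) ≤ 2) hT0.le]; ring
          _ ≤ ((2:ℝ) ^ j₀) ^ (-s) * ϱ :=
              mul_le_mul_of_nonneg_right
                (Real.rpow_le_rpow_of_nonpos (by positivity) h2T (neg_nonpos.2 hs.le)) hϱ.le
          _ = (2:ℝ) ^ (-(j₀:ℝ) * s) * ϱ := by rw [e1]
      · calc (2:ℝ) ^ (-s) * (L₂ ^ (-(s/(s+a))) * ϱ ^ (a/(s+a)) * δ ^ (s/(s+a)))
            ≤ 1 * (L₂ ^ (-(s/(s+a))) * ϱ ^ (a/(s+a)) * δ ^ (s/(s+a))) :=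
              mul_le_mul_of_nonneg_right
                (Real.rpow_le_one_of_one_le_of_nonpos one_le_two (neg_nonpos.2 hs.le))
                (by positivity)
          _ = L₂⁻¹ * T ^ a * δ := by rw [one_mul, Eq2]
          _ ≤ L₂⁻¹ * ((2:ℝ) ^ j₀) ^ a * δ := by
              gcongr
          _ = L₂⁻¹ * (2:ℝ) ^ ((j₀:ℝ) * a) * δ := by rw [e2]
    refine le_trans (le_trans ?_ (h3 j₀)) (le_iSup (fun j => besovNormE d 0 p 1 (f j)) j₀)
    apply ENNReal.ofReal_le_ofReal
    calc CΛ⁻¹ * (2:ℝ) ^ (-s) * L₂ ^ (-(s / (s + a))) * ϱ ^ (a / (s + a)) * δ ^ (s / (s + a))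
        = CΛ⁻¹ * ((2:ℝ) ^ (-s) * (L₂ ^ (-(s/(s+a))) * ϱ ^ (a/(s+a)) * δ ^ (s/(s+a)))) := by
          ring
      _ ≤ CΛ⁻¹ * min ((2:ℝ) ^ (-(j₀:ℝ) * s) * ϱ) (L₂⁻¹ * (2:ℝ) ^ ((j₀:ℝ) * a) * δ) :=
          mul_le_mul_of_nonneg_left key (inv_nonneg.2 hC0.le)
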